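/- If A is a symmetric positive-definite n×n real matrix with eigenvalues λ₁ ≥ λ₂ ≥ ... ≥ λₙ > 0, then D_k(A) = λ₁·λ₂···λ_k for each 1 ≤ k ≤ n, where D_k(A) is the supremum over k-dimensional subspaces E of Vol_k(A(Bⁿ ∩ E))/Vol_k(Bⁿ ∩ E). -/

import Mathlib

open MeasureTheory Matrix
open Finset

variable {n k : ℕ}

private noncomputable def tt (C : Matrix (Fin n) (Fin k) ℝ) (d : Fin n → ℝ) (f : Fin k → Fin n) : ℝ :=
  (∏ j, (d (f j) * C (f j) j)) * (C.submatrix f id).det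

private lemma expand_det (C : Matrix (Fin n) (Fin k) ℝ) (d : Fin n → ℝ) :
    (Cᵀ * Matrix.diagonal d * C).det = ∑ f : Fin k → Fin n, tt C d f := by
  have hM : (Cᵀ * Matrix.diagonal d * C) =
      Matrix.of (fun j => ∑ i, (d i * C i j) • (fun l => C i l)) := by
    ext j l
    simp [Matrix.mul_apply, Matrix.diagonal_apply, Finset.sum_apply]
    congr 1
    ext x
    ring
  rw [hM]
  have : (Matrix.of (fun j => ∑ i, (d i * C i j) • (fun l => C i l))).det
      = Matrix.detRowAlternating.toMultilinearMap (fun j => ∑ i : Fin n, (d i * C i j) • (fun l => C i l)) := rfl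
  rw [this, MultilinearMap.map_sum]
  refine Finset.sum_congr rfl fun f _ => ?_
  have := Matrix.detRowAlternating.toMultilinearMap.map_smul_univ
    (fun j => d (f j) * C (f j) j) (fun j => (fun l => C (f j) l))
  rw [this]
  rfl

private lemma tt_zero (C : Matrix (Fin n) (Fin k) ℝ) (d : Fin n → ℝ) (f : Fin k → Fin n)
    (hf : ¬ Function.Injective f) : tt C d f = 0 := by
  simp only [Function.Injective, not_forall] at hf
  obtain ⟨a, b, hab, hne⟩ := hf
  have : (C.submatrix f id).det = 0 :=
    Matrix.det_zero_of_row_eq hne (by ext l; simp [Matrix.submatrix, hab])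
  simp [tt, this]

private lemma fiber_sum (C : Matrix (Fin n) (Fin k) ℝ) (d : Fin n → ℝ)
    (S : Finset (Fin n)) (hS : S.card = k) :
    ∑ f ∈ Finset.univ.filter (fun f : Fin k → Fin n => Finset.image f Finset.univ = S), tt C d f
      = (∏ i ∈ S, d i) * (C.submatrix (S.orderEmbOfFin hS) id).det ^ 2 := by
  set e := S.orderEmbOfFin hS with he
  have himg : Finset.image (⇑e) Finset.univ = S := by
    apply Finset.coe_injective
    simp only [Finset.coe_image, Finset.coe_univ, Set.image_univ]
    exact S.range_orderEmbOfFin hS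
  -- bijection with permutations
  rw [show (Finset.univ.filter (fun f : Fin k → Fin n => Finset.image f Finset.univ = S))
      = Finset.image (fun π : Equiv.Perm (Fin k) => ⇑e ∘ ⇑π) Finset.univ from ?_]
  · rw [Finset.sum_image ?inj]
    case inj =>
      intro π _ π' _ h
      ext j : 1
      exact e.injective (congrFun h j)
    -- now compute ∑ π, tt C d (e ∘ π)
    have hdet : ∀ π : Equiv.Perm (Fin k),
        (C.submatrix (⇑e ∘ ⇑π) id).det = (Equiv.Perm.sign π : ℝ) * (C.submatrix ⇑e id).det := by
      intro π
      have : C.submatrix (⇑e ∘ ⇑π) id = (C.submatrix ⇑e id).submatrix ⇑π id := by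
        ext i j; simp [Matrix.submatrix]
      rw [this, Matrix.det_permute]
    have hprod : ∀ π : Equiv.Perm (Fin k), (∏ j, d (e (π j))) = ∏ i ∈ S, d i := by
      intro π
      rw [← himg, Finset.prod_image (fun a _ b _ h => e.injective h)]
      exact Equiv.prod_comp π (fun j => d (e j))
    calc ∑ π : Equiv.Perm (Fin k), tt C d (⇑e ∘ ⇑π)
        = ∑ π : Equiv.Perm (Fin k), (∏ i ∈ S, d i) * (C.submatrix ⇑e id).det *
            ((Equiv.Perm.sign π : ℝ) * ∏ j, (C.submatrix ⇑e id) (π j) j) := by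
          refine Finset.sum_congr rfl fun π _ => ?_
          rw [tt, Finset.prod_mul_distrib, hdet π]
          have := hprod π
          simp only [Function.comp_apply]
          rw [this]
          ring_nf
          rw [show (∏ j, C (e (π j)) j) = ∏ j, (C.submatrix ⇑e id) (π j) j from by
            refine Finset.prod_congr rfl fun j _ => ?_; simp [Matrix.submatrix]]
          ring
      _ = (∏ i ∈ S, d i) * (C.submatrix ⇑e id).det * (C.submatrix ⇑e id).det := by
          rw [← Finset.mul_sum]
          congr 1
          rw [Matrix.det_apply']
      _ = (∏ i ∈ S, d i) * (C.submatrix ⇑e id).det ^ 2 := by ring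
  · -- the filter set equals the image of perms
    ext f
    simp only [Finset.mem_filter, Finset.mem_univ, true_and, Finset.mem_image]
    constructor
    · intro hf
      have hinj : Function.Injective f := by
        have := Finset.injOn_of_card_image_eq (s := Finset.univ) (f := f)
          (by rw [hf, hS, Finset.card_univ, Fintype.card_fin])
        intro a b hab
        exact this (Finset.mem_coe.mpr (Finset.mem_univ a)) (Finset.mem_coe.mpr (Finset.mem_univ b)) hab
      -- define the permutation
      have hmem : ∀ j, f j ∈ S := fun j => by
        rw [← hf]; exact Finset.mem_image_of_mem f (Finset.mem_univ j)
      let g : Fin k → Fin k := fun j => (S.orderIsoOfFin hS).symm ⟨f j, hmem j⟩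
      have hginj : Function.Injective g := by
        intro a b hab
        have h2 : ((S.orderIsoOfFin hS) (g a) : Fin n) = ((S.orderIsoOfFin hS) (g b) : Fin n) := by
          rw [hab]
        simp only [g, OrderIso.apply_symm_apply] at h2
        exact hinj h2
      obtain ⟨gb⟩ := Finite.exists_equiv_fin (Fin k)
      have hbij : Function.Bijective g := Finite.injective_iff_bijective.mp hginj
      refine ⟨Equiv.ofBijective g hbij, ?_⟩
      funext j
      show e (g j) = f j
      have : (e (g j) : Fin n) = ((S.orderIsoOfFin hS) (g j) : Fin n) := rfl
      rw [this]
      show ((S.orderIsoOfFin hS) ((S.orderIsoOfFin hS).symm ⟨f j, hmem j⟩) : Fin n) = f j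
      rw [OrderIso.apply_symm_apply]
    · rintro ⟨π, rfl⟩
      rw [show Finset.image (⇑e ∘ ⇑π) Finset.univ = Finset.image ⇑e (Finset.image ⇑π Finset.univ) from
        (Finset.image_image ..).symm]
      rw [Finset.image_univ_equiv]
      exact himg

private lemma fiber_sum_zero (C : Matrix (Fin n) (Fin k) ℝ) (d : Fin n → ℝ)
    (S : Finset (Fin n)) (hS : S.card ≠ k) :
    ∑ f ∈ Finset.univ.filter (fun f : Fin k → Fin n => Finset.image f Finset.univ = S), tt C d f
      = 0 := by
  refine Finset.sum_eq_zero fun f hf => ?_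
  simp only [Finset.mem_filter, Finset.mem_univ, true_and] at hf
  refine tt_zero C d f fun hinj => hS ?_
  rw [← hf, Finset.card_image_of_injective _ hinj, Finset.card_univ, Fintype.card_fin]

theorem det_conj_diag_le (C : Matrix (Fin n) (Fin k) ℝ) (hC : Cᵀ * C = 1)
    (d : Fin n → ℝ) {m : ℝ}
    (hm : ∀ f : Fin k → Fin n, Function.Injective f → ∏ j, d (f j) ≤ m) :
    (Cᵀ * Matrix.diagonal d * C).det ≤ m := by
  have key : ∀ d' : Fin n → ℝ, (Cᵀ * Matrix.diagonal d' * C).det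
      = ∑ S : Finset (Fin n), ∑ f ∈ Finset.univ.filter
          (fun f : Fin k → Fin n => Finset.image f Finset.univ = S), tt C d' f := by
    intro d'
    rw [expand_det, ← Finset.sum_fiberwise_of_maps_to
      (g := fun f : Fin k → Fin n => Finset.image f Finset.univ) (t := Finset.univ)
      (fun f _ => Finset.mem_univ _) (tt C d')]
  have hone : (Cᵀ * Matrix.diagonal (fun _ : Fin n => (1:ℝ)) * C).det = 1 := by
    rw [show Matrix.diagonal (fun _ : Fin n => (1:ℝ)) = 1 from Matrix.diagonal_one,
      Matrix.mul_one, hC, Matrix.det_one]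
  calc (Cᵀ * Matrix.diagonal d * C).det
      = ∑ S : Finset (Fin n), ∑ f ∈ Finset.univ.filter
          (fun f : Fin k → Fin n => Finset.image f Finset.univ = S), tt C d f := key d
    _ ≤ ∑ S : Finset (Fin n), m * ∑ f ∈ Finset.univ.filter
          (fun f : Fin k → Fin n => Finset.image f Finset.univ = S), tt C (fun _ => 1) f := by
        refine Finset.sum_le_sum fun S _ => ?_
        by_cases hS : S.card = k
        · rw [fiber_sum C d S hS, fiber_sum C (fun _ => 1) S hS]
          simp only [Finset.prod_const_one, one_mul]
          have hinj : Function.Injective ⇑(S.orderEmbOfFin hS) := (S.orderEmbOfFin hS).injective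
          have himg : Finset.image (⇑(S.orderEmbOfFin hS)) Finset.univ = S := by
            apply Finset.coe_injective
            simp only [Finset.coe_image, Finset.coe_univ, Set.image_univ]
            exact S.range_orderEmbOfFin hS
          have hprodS : (∏ j, d (S.orderEmbOfFin hS j)) = ∏ i ∈ S, d i := by
            conv_rhs => rw [← himg]
            exact (Finset.prod_image (fun a _ b _ h => hinj h)).symm
          have hle : ∏ i ∈ S, d i ≤ m := by
            rw [← hprodS]; exact hm _ hinj
          exact mul_le_mul_of_nonneg_right hle (sq_nonneg _)
        · rw [fiber_sum_zero C d S hS, fiber_sum_zero C (fun _ => 1) S hS, mul_zero]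
    _ = m * (Cᵀ * Matrix.diagonal (fun _ : Fin n => (1:ℝ)) * C).det := by
        rw [← Finset.mul_sum, key]
    _ = m := by rw [hone, mul_one]

private lemma prod_filter_eq_castLE (lam : Fin n → ℝ) (hkn : k ≤ n) :
    ∏ i ∈ Finset.univ.filter (fun i : Fin n => (i : ℕ) < k), lam i
      = ∏ j : Fin k, lam (Fin.castLE hkn j) := by
  have himg : Finset.univ.filter (fun i : Fin n => (i : ℕ) < k)
      = Finset.image (Fin.castLE hkn) Finset.univ := by
    ext i
    simp only [Finset.mem_filter, Finset.mem_univ, true_and, Finset.mem_image]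
    constructor
    · intro hi; exact ⟨⟨i, hi⟩, by ext; rfl⟩
    · rintro ⟨j, rfl⟩; exact j.2
  rw [himg, Finset.prod_image (fun a _ b _ h => Fin.castLE_injective hkn h)]

private lemma le_orderEmbOfFin (S : Finset (Fin n)) (hS : S.card = k) :
    ∀ m : ℕ, ∀ hm : m < k, m ≤ ((S.orderEmbOfFin hS) ⟨m, hm⟩ : ℕ) := by
  intro m
  induction m with
  | zero => intro _; exact Nat.zero_le _
  | succ i ih =>
    intro hm
    have h1 : i < k := Nat.lt_of_succ_lt hm
    have h2 := ih h1
    have h3 : ((S.orderEmbOfFin hS) ⟨i, h1⟩ : ℕ) < ((S.orderEmbOfFin hS) ⟨i + 1, hm⟩ : ℕ) :=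
      (S.orderEmbOfFin hS).strictMono (show (⟨i, h1⟩ : Fin k) < ⟨i + 1, hm⟩ from by
        simp [Fin.lt_def])
    omega

private lemma prod_subset_le (lam : Fin n → ℝ) (hanti : Antitone lam)
    (hpos : ∀ i, 0 < lam i) (hkn : k ≤ n) (S : Finset (Fin n)) (hS : S.card = k) :
    ∏ i ∈ S, lam i ≤ ∏ j : Fin k, lam (Fin.castLE hkn j) := by
  set e := S.orderEmbOfFin hS with he
  have hinj : Function.Injective ⇑e := e.injective
  have himg : Finset.image (⇑e) Finset.univ = S := by
    apply Finset.coe_injective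
    simp only [Finset.coe_image, Finset.coe_univ, Set.image_univ]
    exact S.range_orderEmbOfFin hS
  have hprodS : (∏ i ∈ S, lam i) = ∏ j : Fin k, lam (e j) := by
    conv_lhs => rw [← himg]
    exact Finset.prod_image (fun a _ b _ h => hinj h)
  rw [hprodS]
  refine Finset.prod_le_prod (fun j _ => (hpos _).le) (fun j _ => ?_)
  refine hanti ?_
  rw [Fin.le_def]
  exact le_orderEmbOfFin S hS j.1 j.2

private lemma gram_det_le (A : Matrix (Fin n) (Fin n) ℝ) (hA : A.PosDef)
    (lam : Fin n → ℝ) (hanti : Antitone lam)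
    (σ : Equiv.Perm (Fin n)) (hσ : ∀ i, lam i = hA.1.eigenvalues (σ i))
    (hkn : k ≤ n) (B : Matrix (Fin n) (Fin k) ℝ) (hB : Bᵀ * B = 1) :
    (Bᵀ * (A * A) * B).det ≤ (∏ j : Fin k, lam (Fin.castLE hkn j)) ^ 2 := by
  have hpos : ∀ i, 0 < lam i := fun i => (hσ i) ▸ hA.eigenvalues_pos (σ i)
  set U : Matrix (Fin n) (Fin n) ℝ := (hA.1.eigenvectorUnitary : Matrix (Fin n) (Fin n) ℝ) with hU
  have hUsU : U * star U = 1 := Unitary.coe_mul_star_self hA.1.eigenvectorUnitary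
  have hsUU : star U * U = 1 := Unitary.coe_star_mul_self hA.1.eigenvectorUnitary
  have hspec : A = U * Matrix.diagonal hA.1.eigenvalues * star U := by
    have h := hA.1.spectral_theorem
    have : (RCLike.ofReal ∘ hA.1.eigenvalues : Fin n → ℝ) = hA.1.eigenvalues := by
      ext i; simp
    rw [this] at h
    exact h
  have hA2 : A * A = U * Matrix.diagonal (fun i => hA.1.eigenvalues i ^ 2) * star U := by
    conv_lhs => rw [hspec]
    calc U * Matrix.diagonal hA.1.eigenvalues * star U *
          (U * Matrix.diagonal hA.1.eigenvalues * star U)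
        = U * Matrix.diagonal hA.1.eigenvalues * (star U * U) *
            Matrix.diagonal hA.1.eigenvalues * star U := by
          simp only [Matrix.mul_assoc]
      _ = U * (Matrix.diagonal hA.1.eigenvalues * Matrix.diagonal hA.1.eigenvalues) * star U := by
          rw [hsUU, Matrix.mul_one]
          simp only [Matrix.mul_assoc]
      _ = U * Matrix.diagonal (fun i => hA.1.eigenvalues i ^ 2) * star U := by
          rw [Matrix.diagonal_mul_diagonal]
          have hdd : (fun i => hA.1.eigenvalues i * hA.1.eigenvalues i)
              = fun i => hA.1.eigenvalues i ^ 2 := by ext i; ring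
          rw [hdd]
  set C : Matrix (Fin n) (Fin k) ℝ := star U * B with hC
  have hCt : Cᵀ = Bᵀ * U := by
    rw [hC, Matrix.transpose_mul]
    congr 1
  have hCC : Cᵀ * C = 1 := by
    rw [hCt, hC, show Bᵀ * U * (star U * B) = Bᵀ * (U * star U) * B by
      simp only [Matrix.mul_assoc], hUsU, Matrix.mul_one, hB]
  have hmain : Bᵀ * (A * A) * B = Cᵀ * Matrix.diagonal (fun i => hA.1.eigenvalues i ^ 2) * C := by
    rw [hCt, hC, hA2]
    simp only [Matrix.mul_assoc]
  rw [hmain]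
  refine det_conj_diag_le C hCC _ (fun f hf => ?_)
  have h1 : (∏ j, hA.1.eigenvalues (f j) ^ 2) = (∏ j, hA.1.eigenvalues (f j)) ^ 2 := by
    rw [Finset.prod_pow]
  rw [h1]
  have h2 : (∏ j, hA.1.eigenvalues (f j)) = ∏ j, lam (σ.symm (f j)) := by
    refine Finset.prod_congr rfl fun j _ => ?_
    have := hσ (σ.symm (f j))
    rw [Equiv.apply_symm_apply] at this
    exact this.symm
  rw [h2]
  have hginj : Function.Injective (fun j => σ.symm (f j)) := fun a b hab =>
    hf (σ.symm.injective hab)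
  have himg : (Finset.image (fun j => σ.symm (f j)) Finset.univ).card = k := by
    rw [Finset.card_image_of_injective _ hginj, Finset.card_univ, Fintype.card_fin]
  have h3 : (∏ j, lam (σ.symm (f j)))
      = ∏ i ∈ Finset.image (fun j => σ.symm (f j)) Finset.univ, lam i :=
    (Finset.prod_image (fun a _ b _ h => hginj h)).symm
  rw [h3]
  refine pow_le_pow_left₀ (Finset.prod_nonneg fun i _ => (hpos i).le) ?_ 2
  exact prod_subset_le lam hanti hpos hkn _ himg

open MeasureTheory in
private lemma term_eq {n k : ℕ} (T : EuclideanSpace ℝ (Fin n) →ₗ[ℝ] EuclideanSpace ℝ (Fin n))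
    (hT : Function.Injective T)
    (E : Submodule ℝ (EuclideanSpace ℝ (Fin n))) (hE : Module.finrank ℝ E = k)
    (b : OrthonormalBasis (Fin k) ℝ E) :
    μH[k] (⇑T '' (Metric.ball 0 1 ∩ (E : Set (EuclideanSpace ℝ (Fin n))))) /
        μH[k] (Metric.ball 0 1 ∩ (E : Set (EuclideanSpace ℝ (Fin n))))
      = ENNReal.ofReal (Real.sqrt (Matrix.det (Matrix.of fun i j : Fin k =>
          (inner ℝ (T ((b i : EuclideanSpace ℝ (Fin n)))) (T ((b j : EuclideanSpace ℝ (Fin n)))) : ℝ)))) := by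
  classical
  set F : Submodule ℝ (EuclideanSpace ℝ (Fin n)) := E.map T with hFdef
  have eEF : E ≃ₗ[ℝ] F := Submodule.equivMapOfInjective T hT E
  have hF : Module.finrank ℝ F = k := by rw [← hE]; exact eEF.finrank_eq.symm
  let b' : OrthonormalBasis (Fin k) ℝ F :=
    (stdOrthonormalBasis ℝ F).reindex (finCongr hF)
  let Φ : EuclideanSpace ℝ (Fin k) →ₗᵢ[ℝ] EuclideanSpace ℝ (Fin n) :=
    E.subtypeₗᵢ.comp b.repr.symm.toLinearIsometry
  let Ψ : EuclideanSpace ℝ (Fin k) →ₗᵢ[ℝ] EuclideanSpace ℝ (Fin n) :=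
    F.subtypeₗᵢ.comp b'.repr.symm.toLinearIsometry
  have hTE : ∀ x ∈ E, T x ∈ F := fun x hx => Submodule.mem_map_of_mem hx
  let T' : E →ₗ[ℝ] F := T.restrict hTE
  let g : EuclideanSpace ℝ (Fin k) →ₗ[ℝ] EuclideanSpace ℝ (Fin k) :=
    (b'.repr.toLinearEquiv.toLinearMap) ∘ₗ T' ∘ₗ (b.repr.symm.toLinearEquiv.toLinearMap)
  have hΦ : ∀ y, Φ y = ((b.repr.symm y : E) : EuclideanSpace ℝ (Fin n)) := fun y => rfl
  have hset : Metric.ball (0 : EuclideanSpace ℝ (Fin n)) 1 ∩ (E : Set (EuclideanSpace ℝ (Fin n)))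
      = ⇑Φ '' Metric.ball 0 1 := by
    ext x
    constructor
    · rintro ⟨hb1, hx⟩
      refine ⟨b.repr ⟨x, hx⟩, ?_, ?_⟩
      · rw [Metric.mem_ball, dist_zero_right, b.repr.norm_map]
        rw [Metric.mem_ball, dist_zero_right] at hb1
        exact hb1
      · rw [hΦ, LinearIsometryEquiv.symm_apply_apply]
    · rintro ⟨y, hy, rfl⟩
      constructor
      · rw [Metric.mem_ball, dist_zero_right, Φ.norm_map]
        rw [Metric.mem_ball, dist_zero_right] at hy
        exact hy
      · rw [hΦ]; exact ((b.repr.symm y : E)).2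
  have hTΦ : ∀ y, T (Φ y) = Ψ (g y) := by
    intro y
    rw [hΦ]
    show T ((b.repr.symm y : E) : EuclideanSpace ℝ (Fin n))
      = ((b'.repr.symm (b'.repr (T' (b.repr.symm y))) : F) : EuclideanSpace ℝ (Fin n))
    rw [LinearIsometryEquiv.symm_apply_apply]
    rfl
  haveI : (μH[(k : ℝ)] : Measure (EuclideanSpace ℝ (Fin k))).IsAddHaarMeasure := by
    have h := MeasureTheory.isAddHaarMeasure_hausdorffMeasure (E := EuclideanSpace ℝ (Fin k))
    simpa only [finrank_euclideanSpace, Fintype.card_fin] using h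
  have himg : ⇑T '' (Metric.ball 0 1 ∩ (E : Set (EuclideanSpace ℝ (Fin n))))
      = ⇑Ψ '' (⇑g '' (Metric.ball 0 1)) := by
    rw [hset, ← Set.image_comp, ← Set.image_comp]
    refine Set.image_congr fun y _ => hTΦ y
  have h1 : μH[(k : ℝ)] (Metric.ball (0 : EuclideanSpace ℝ (Fin n)) 1 ∩ (E : Set _))
      = μH[(k : ℝ)] (Metric.ball (0 : EuclideanSpace ℝ (Fin k)) 1) := by
    rw [hset]
    exact Φ.isometry.hausdorffMeasure_image (Or.inl (Nat.cast_nonneg k)) _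
  have h2 : μH[(k : ℝ)] (⇑T '' (Metric.ball 0 1 ∩ (E : Set _)))
      = μH[(k : ℝ)] (⇑g '' (Metric.ball (0 : EuclideanSpace ℝ (Fin k)) 1)) := by
    rw [himg]
    exact Ψ.isometry.hausdorffMeasure_image (Or.inl (Nat.cast_nonneg k)) _
  have h3 : μH[(k : ℝ)] (⇑g '' (Metric.ball (0 : EuclideanSpace ℝ (Fin k)) 1))
      = ENNReal.ofReal |LinearMap.det g| * μH[(k : ℝ)] (Metric.ball (0 : EuclideanSpace ℝ (Fin k)) 1) :=
    Measure.addHaar_image_linearMap _ g _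
  have hb0 : μH[(k : ℝ)] (Metric.ball (0 : EuclideanSpace ℝ (Fin k)) 1) ≠ 0 :=
    (Metric.measure_ball_pos _ _ one_pos).ne'
  have hbt : μH[(k : ℝ)] (Metric.ball (0 : EuclideanSpace ℝ (Fin k)) 1) ≠ ⊤ :=
    measure_ball_lt_top.ne
  rw [h1, h2, h3, mul_div_assoc, ENNReal.div_self hb0 hbt, mul_one]
  -- now compute |det g|
  congr 1
  let bk := (EuclideanSpace.basisFun (Fin k) ℝ).toBasis
  set M : Matrix (Fin k) (Fin k) ℝ := LinearMap.toMatrix bk bk g with hM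
  have hdetM : LinearMap.det g = M.det := (LinearMap.det_toMatrix bk g).symm
  have hMent : ∀ l i, M l i = g (EuclideanSpace.single i 1) l := by
    intro l i
    rw [hM, LinearMap.toMatrix_apply]
    simp only [bk, OrthonormalBasis.coe_toBasis, EuclideanSpace.basisFun_apply,
      OrthonormalBasis.coe_toBasis_repr_apply, EuclideanSpace.basisFun_repr]
  have hgi : ∀ i : Fin k, g (EuclideanSpace.single i 1) = b'.repr (T' (b i)) := by
    intro i
    show b'.repr (T' (b.repr.symm (EuclideanSpace.single i 1))) = _
    rw [OrthonormalBasis.repr_symm_single]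
  have hMM : Mᵀ * M = Matrix.of (fun i j : Fin k =>
      (inner ℝ (T ((b i : EuclideanSpace ℝ (Fin n)))) (T ((b j : EuclideanSpace ℝ (Fin n)))) : ℝ)) := by
    ext i j
    have : (Mᵀ * M) i j = ∑ l, M l i * M l j := by
      simp [Matrix.mul_apply, Matrix.transpose_apply]
    rw [this]
    have hinner : ∑ l, M l i * M l j
        = (inner ℝ (g (EuclideanSpace.single i 1)) (g (EuclideanSpace.single j 1)) : ℝ) := by
      rw [PiLp.inner_apply]
      refine Finset.sum_congr rfl fun l _ => ?_
      rw [hMent, hMent]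
      simp [RCLike.inner_apply, conj_trivial, mul_comm]
    rw [hinner, hgi, hgi, LinearIsometryEquiv.inner_map_map, Submodule.coe_inner]
    rfl
  have hsq : M.det ^ 2 = (Matrix.of (fun i j : Fin k =>
      (inner ℝ (T ((b i : EuclideanSpace ℝ (Fin n)))) (T ((b j : EuclideanSpace ℝ (Fin n)))) : ℝ))).det := by
    rw [← hMM, Matrix.det_mul, Matrix.det_transpose]
    ring
  rw [hdetM, ← Real.sqrt_sq_eq_abs, hsq]

private lemma inner_toEuclideanLin (A : Matrix (Fin n) (Fin n) ℝ) (v w : EuclideanSpace ℝ (Fin n)) :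
    (inner ℝ (Matrix.toEuclideanLin A v) (Matrix.toEuclideanLin A w) : ℝ)
      = ∑ l, (A *ᵥ (WithLp.equiv 2 (Fin n → ℝ) v)) l * (A *ᵥ (WithLp.equiv 2 (Fin n → ℝ) w)) l := by
  rw [PiLp.inner_apply]
  refine Finset.sum_congr rfl fun l _ => ?_
  rw [Matrix.toEuclideanLin_apply, Matrix.toEuclideanLin_apply]
  simp [RCLike.inner_apply, mul_comm]

private lemma BtB_eq_one (E : Submodule ℝ (EuclideanSpace ℝ (Fin n)))
    (b : OrthonormalBasis (Fin k) ℝ E) :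
    (Matrix.of fun (l : Fin n) (i : Fin k) => ((b i : EuclideanSpace ℝ (Fin n)) l))ᵀ *
      (Matrix.of fun (l : Fin n) (i : Fin k) => ((b i : EuclideanSpace ℝ (Fin n)) l)) = 1 := by
  ext i j
  have horth := orthonormal_iff_ite.mp b.orthonormal i j
  rw [Submodule.coe_inner, PiLp.inner_apply] at horth
  simp only [RCLike.inner_apply, conj_trivial] at horth
  rw [Matrix.mul_apply, Matrix.one_apply]
  simp only [Matrix.transpose_apply, Matrix.of_apply]
  rw [← horth]; exact Finset.sum_congr rfl fun _ _ => mul_comm _ _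

private lemma gram_eq_BAAB (A : Matrix (Fin n) (Fin n) ℝ) (hsymm : Aᵀ = A)
    (E : Submodule ℝ (EuclideanSpace ℝ (Fin n))) (b : OrthonormalBasis (Fin k) ℝ E) :
    (Matrix.of fun i j : Fin k =>
        (inner ℝ (Matrix.toEuclideanLin A ((b i : EuclideanSpace ℝ (Fin n))))
               (Matrix.toEuclideanLin A ((b j : EuclideanSpace ℝ (Fin n)))) : ℝ))
      = (Matrix.of fun (l : Fin n) (i : Fin k) => ((b i : EuclideanSpace ℝ (Fin n)) l))ᵀ *
          (A * A) * (Matrix.of fun (l : Fin n) (i : Fin k) => ((b i : EuclideanSpace ℝ (Fin n)) l)) := by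
  set B := Matrix.of fun (l : Fin n) (i : Fin k) => ((b i : EuclideanSpace ℝ (Fin n)) l) with hB
  have h1 : Bᵀ * (A * A) * B = (A * B)ᵀ * (A * B) := by
    rw [Matrix.transpose_mul, hsymm]
    simp only [Matrix.mul_assoc]
  rw [h1]
  ext i j
  rw [Matrix.of_apply, inner_toEuclideanLin, Matrix.mul_apply]
  refine Finset.sum_congr rfl fun l _ => ?_
  simp only [Matrix.transpose_apply, Matrix.mul_apply, Matrix.mulVec, dotProduct]
  rfl

/-- `Dk k T` is the maximal factor by which `T` can increase `k`-dimensional volumes: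
the supremum over `k`-dimensional subspaces `E` of
`Vol_k(T(Bⁿ ∩ E)) / Vol_k(Bⁿ ∩ E)`, volumes measured by `k`-dimensional
Hausdorff measure. -/
noncomputable def Dk {n : ℕ} (k : ℕ)
    (T : EuclideanSpace ℝ (Fin n) →ₗ[ℝ] EuclideanSpace ℝ (Fin n)) : ENNReal :=
  ⨆ (E : Submodule ℝ (EuclideanSpace ℝ (Fin n))) (_ : Module.finrank ℝ E = k),
    μH[k] (T '' (Metric.ball (0 : EuclideanSpace ℝ (Fin n)) 1 ∩ (E : Set (EuclideanSpace ℝ (Fin n))))) /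
      μH[k] (Metric.ball (0 : EuclideanSpace ℝ (Fin n)) 1 ∩ (E : Set (EuclideanSpace ℝ (Fin n))))

theorem stmt2 {n : ℕ} (A : Matrix (Fin n) (Fin n) ℝ) (hA : A.PosDef)
    (lam : Fin n → ℝ) (hanti : Antitone lam)
    (σ : Equiv.Perm (Fin n)) (hσ : ∀ i, lam i = hA.1.eigenvalues (σ i))
    (k : ℕ) (hk1 : 1 ≤ k) (hkn : k ≤ n) :
    Dk k (Matrix.toEuclideanLin A) =
      ENNReal.ofReal (∏ i ∈ Finset.univ.filter (fun i : Fin n => (i : ℕ) < k), lam i) := by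
  classical
  have hsymm : Aᵀ = A := by
    have h := hA.1
    rwa [Matrix.IsHermitian, Matrix.conjTranspose_eq_transpose_of_trivial] at h
  have hTinj : Function.Injective ⇑(Matrix.toEuclideanLin A) := by
    have : Invertible A := A.invertibleOfIsUnitDet (isUnit_iff_ne_zero.mpr hA.det_pos.ne')
    intro x y hxy
    have h2 := congrArg (WithLp.equiv 2 (Fin n → ℝ)) hxy
    change Matrix.toLin' A (WithLp.equiv 2 (Fin n → ℝ) x) = Matrix.toLin' A (WithLp.equiv 2 (Fin n → ℝ) y) at h2
    rw [Matrix.toLin'_apply, Matrix.toLin'_apply] at h2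
    have h3 := Matrix.mulVec_injective_of_invertible A h2
    exact (WithLp.equiv 2 (Fin n → ℝ)).injective h3
  have hpos : ∀ i, 0 < lam i := fun i => (hσ i) ▸ hA.eigenvalues_pos (σ i)
  have hPcast : (∏ i ∈ Finset.univ.filter (fun i : Fin n => (i : ℕ) < k), lam i)
      = ∏ j : Fin k, lam (Fin.castLE hkn j) := prod_filter_eq_castLE lam hkn
  have hPpos : 0 < ∏ j : Fin k, lam (Fin.castLE hkn j) :=
    Finset.prod_pos fun j _ => hpos _
  rw [hPcast]
  apply le_antisymm
  · -- upper bound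
    refine iSup₂_le fun E hE => ?_
    let b : OrthonormalBasis (Fin k) ℝ E := (stdOrthonormalBasis ℝ E).reindex (finCongr hE)
    rw [term_eq (Matrix.toEuclideanLin A) hTinj E hE b]
    refine ENNReal.ofReal_le_ofReal ?_
    rw [gram_eq_BAAB A hsymm E b]
    have hle := gram_det_le A hA lam hanti σ hσ hkn _ (BtB_eq_one E b)
    calc Real.sqrt (((Matrix.of fun (l : Fin n) (i : Fin k) =>
            ((b i : EuclideanSpace ℝ (Fin n)) l))ᵀ * (A * A) *
            (Matrix.of fun (l : Fin n) (i : Fin k) => ((b i : EuclideanSpace ℝ (Fin n)) l))).det)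
        ≤ Real.sqrt ((∏ j : Fin k, lam (Fin.castLE hkn j)) ^ 2) := Real.sqrt_le_sqrt hle
      _ = ∏ j : Fin k, lam (Fin.castLE hkn j) := by
          rw [Real.sqrt_sq hPpos.le]
  · -- lower bound
    set u : Fin k → EuclideanSpace ℝ (Fin n) :=
      fun j => hA.1.eigenvectorBasis (σ (Fin.castLE hkn j)) with hu_def
    have hu : Orthonormal ℝ u :=
      hA.1.eigenvectorBasis.orthonormal.comp _ (σ.injective.comp (Fin.castLE_injective hkn))
    set E₀ : Submodule ℝ (EuclideanSpace ℝ (Fin n)) :=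
      Submodule.span ℝ ((Finset.image u Finset.univ : Finset (EuclideanSpace ℝ (Fin n))) :
        Set (EuclideanSpace ℝ (Fin n))) with hE₀def
    let b₀ : OrthonormalBasis (Fin k) ℝ E₀ :=
      (OrthonormalBasis.span hu Finset.univ).reindex (Equiv.subtypeUnivEquiv Finset.mem_univ)
    have hb₀ : ∀ j, (b₀ j : EuclideanSpace ℝ (Fin n)) = u j := by
      intro j
      rw [OrthonormalBasis.reindex_apply]
      exact OrthonormalBasis.span_apply hu Finset.univ _
    have hE₀ : Module.finrank ℝ E₀ = k := by
      rw [Module.finrank_eq_card_basis b₀.toBasis, Fintype.card_fin]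
    refine le_iSup₂_of_le E₀ hE₀ ?_
    rw [term_eq (Matrix.toEuclideanLin A) hTinj E₀ hE₀ b₀]
    refine le_of_eq ?_
    congr 1
    -- compute the Gram determinant
    have hTu : ∀ j : Fin k,
        Matrix.toEuclideanLin A (u j) = lam (Fin.castLE hkn j) • u j := by
      intro j
      have h := hA.1.mulVec_eigenvectorBasis (σ (Fin.castLE hkn j))
      rw [Matrix.toEuclideanLin_apply, hu_def]
      rw [h, ← hσ]
      rfl
    have hgram : (Matrix.of fun i j : Fin k =>
        (inner ℝ (Matrix.toEuclideanLin A ((b₀ i : EuclideanSpace ℝ (Fin n))))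
               (Matrix.toEuclideanLin A ((b₀ j : EuclideanSpace ℝ (Fin n)))) : ℝ))
        = Matrix.diagonal (fun j : Fin k => lam (Fin.castLE hkn j) ^ 2) := by
      ext i j
      rw [Matrix.of_apply, hb₀, hb₀, hTu, hTu, real_inner_smul_left, real_inner_smul_right]
      have horth := orthonormal_iff_ite.mp hu i j
      rw [horth]
      by_cases h : i = j
      · subst h; simp [Matrix.diagonal]; ring
      · simp [Matrix.diagonal, h]
    rw [hgram, Matrix.det_diagonal, Finset.prod_pow, Real.sqrt_sq hPpos.le]
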